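/- For every ε > 0 there exists a constant C = C(ε) such that for all x ∈ ℝ²: ∫_{ℝ²} |x − x₁|^{−1} · ⟨x₁⟩^{−2−ε} dx₁ ≤ C ⟨x⟩^{−1}. Equivalently, the function x₁ ↦ ⟨x₁⟩^{−1−ε/2} |x − x₁|^{−1/2} has L²(ℝ²) norm bounded by C' ⟨x⟩^{−1/2} uniformly in x. -/

import Mathlib

open MeasureTheory Real Metric Set

open scoped ENNReal

namespace Stmt9Aux

noncomputable section

local notation "E" => EuclideanSpace ℝ (Fin 2)

lemma finrank_E : Module.finrank ℝ (EuclideanSpace ℝ (Fin 2)) = 2 := by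
  simp [finrank_euclideanSpace]

lemma bracket_triangle (x x₁ : E) :
    Real.sqrt (1 + ‖x‖ ^ 2) ≤ Real.sqrt (1 + ‖x₁‖ ^ 2) + ‖x - x₁‖ := by
  have ha : (0:ℝ) ≤ ‖x₁‖ := norm_nonneg _
  have hd : (0:ℝ) ≤ ‖x - x₁‖ := norm_nonneg _
  have h1 : ‖x‖ ≤ ‖x₁‖ + ‖x - x₁‖ := by
    have := norm_sub_norm_le x x₁
    linarith
  have hs : Real.sqrt (1 + ‖x‖ ^ 2) ≤ Real.sqrt (1 + (‖x₁‖ + ‖x - x₁‖) ^ 2) :=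
    Real.sqrt_le_sqrt (by nlinarith [norm_nonneg x])
  refine hs.trans ?_
  have hA2 : Real.sqrt (1 + ‖x₁‖ ^ 2) ^ 2 = 1 + ‖x₁‖ ^ 2 := Real.sq_sqrt (by positivity)
  have hA0 : (0:ℝ) ≤ Real.sqrt (1 + ‖x₁‖ ^ 2) := Real.sqrt_nonneg _
  have haA : ‖x₁‖ ≤ Real.sqrt (1 + ‖x₁‖ ^ 2) := by nlinarith
  have h2 : Real.sqrt (1 + (‖x₁‖ + ‖x - x₁‖) ^ 2)
      ≤ Real.sqrt ((Real.sqrt (1 + ‖x₁‖ ^ 2) + ‖x - x₁‖) ^ 2) :=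
    Real.sqrt_le_sqrt (by nlinarith)
  rwa [Real.sqrt_sq (by positivity)] at h2

lemma ball_bound {ρ : ℝ} (hρ : 0 < ρ) :
    ∫⁻ y in ball (0:E) ρ, ENNReal.ofReal ‖y‖⁻¹ ≤
      volume (ball (0:E) 1) * ENNReal.ofReal (2 * ρ) := by
  set κ := volume (ball (0:E) 1) with hκdef
  have hκ : κ ≠ ∞ := measure_ball_lt_top.ne
  have hballs : ∀ r : ℝ, 0 ≤ r →
      volume (closedBall (0:E) r) = ENNReal.ofReal (r ^ 2) * κ := by
    intro r hr
    rw [Measure.addHaar_closedBall volume (0:E) hr, finrank_E]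
  rw [lintegral_eq_lintegral_meas_le (f := fun y : E => ‖y‖⁻¹) _ (Filter.Eventually.of_forall fun y => by positivity)
      measurable_norm.inv.aemeasurable]
  have h1 : ∫⁻ t in Ioc (0:ℝ) ρ⁻¹, (volume.restrict (ball (0:E) ρ)) {y : E | t ≤ ‖y‖⁻¹}
      ≤ κ * ENNReal.ofReal ρ := by
    have hb : ∀ t : ℝ, (volume.restrict (ball (0:E) ρ)) {y : E | t ≤ ‖y‖⁻¹}
        ≤ ENNReal.ofReal (ρ ^ 2) * κ := by
      intro t
      refine le_trans (le_trans (measure_mono (subset_univ _))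
        (le_of_eq (Measure.restrict_apply_univ _))) ?_
      rw [← hballs ρ hρ.le]
      exact measure_mono ball_subset_closedBall
    calc ∫⁻ t in Ioc (0:ℝ) ρ⁻¹, (volume.restrict (ball (0:E) ρ)) {y : E | t ≤ ‖y‖⁻¹}
        ≤ ∫⁻ _ in Ioc (0:ℝ) ρ⁻¹, ENNReal.ofReal (ρ ^ 2) * κ := lintegral_mono fun t => hb t
      _ = ENNReal.ofReal (ρ ^ 2) * κ * volume (Ioc (0:ℝ) ρ⁻¹) := setLIntegral_const _ _
      _ = κ * ENNReal.ofReal ρ := by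
          rw [Real.volume_Ioc]
          rw [mul_comm (ENNReal.ofReal (ρ ^ 2)) κ, mul_assoc,
            ← ENNReal.ofReal_mul (by positivity)]
          congr 1
          rw [sub_zero, sq]
          field_simp
  have h2 : ∫⁻ t in Ioi (ρ⁻¹ : ℝ), (volume.restrict (ball (0:E) ρ)) {y : E | t ≤ ‖y‖⁻¹}
      ≤ κ * ENNReal.ofReal ρ := by
    have hsub : ∀ t : ℝ, 0 < t → {y : E | t ≤ ‖y‖⁻¹} ⊆ closedBall (0:E) t⁻¹ := by
      intro t ht y hy
      simp only [mem_setOf_eq] at hy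
      simp only [mem_closedBall, dist_zero_right]
      rcases eq_or_lt_of_le (norm_nonneg y) with h0 | h0
      · rw [← h0]; positivity
      · rw [← inv_inv ‖y‖]
        exact inv_anti₀ ht hy
    calc ∫⁻ t in Ioi (ρ⁻¹ : ℝ), (volume.restrict (ball (0:E) ρ)) {y : E | t ≤ ‖y‖⁻¹}
        ≤ ∫⁻ t in Ioi (ρ⁻¹ : ℝ), κ * ENNReal.ofReal (t ^ (-2 : ℝ)) := by
          refine setLIntegral_mono' measurableSet_Ioi fun t ht => ?_
          have ht0 : 0 < t := lt_trans (by positivity) ht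
          refine le_trans (le_trans (Measure.restrict_apply_le _ _)
            (measure_mono (hsub t ht0))) ?_
          rw [hballs t⁻¹ (by positivity), mul_comm]
          have : (t⁻¹) ^ 2 = t ^ (-2 : ℝ) := by
            rw [show (-2:ℝ) = ((-2:ℤ):ℝ) by norm_num, Real.rpow_intCast, zpow_neg, inv_pow]
            norm_cast
          rw [this]
      _ = κ * ∫⁻ t in Ioi (ρ⁻¹ : ℝ), ENNReal.ofReal (t ^ (-2 : ℝ)) :=
          lintegral_const_mul' _ _ hκ
      _ ≤ κ * ENNReal.ofReal ρ := by
          refine mul_le_mul_right (le_of_eq ?_) _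
          rw [← ofReal_integral_eq_lintegral_ofReal
            (integrableOn_Ioi_rpow_of_lt (by norm_num) (by positivity))
            ((ae_restrict_mem measurableSet_Ioi).mono fun t ht => by
              have ht0 : (0:ℝ) < t := lt_trans (by positivity) ht
              positivity)]
          congr 1
          rw [integral_Ioi_rpow_of_lt (by norm_num) (by positivity)]
          norm_num
          rw [show (-1:ℝ) = ((-1:ℤ):ℝ) by norm_num, Real.rpow_intCast]
          simp
  calc ∫⁻ t in Ioi (0:ℝ), (volume.restrict (ball (0:E) ρ)) {y : E | t ≤ ‖y‖⁻¹}
      ≤ ∫⁻ t in Ioc (0:ℝ) ρ⁻¹ ∪ Ioi ρ⁻¹,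
          (volume.restrict (ball (0:E) ρ)) {y : E | t ≤ ‖y‖⁻¹} := by
        refine lintegral_mono_set ?_
        rw [Ioc_union_Ioi_eq_Ioi (by positivity)]
    _ ≤ (∫⁻ t in Ioc (0:ℝ) ρ⁻¹, (volume.restrict (ball (0:E) ρ)) {y : E | t ≤ ‖y‖⁻¹})
        + ∫⁻ t in Ioi (ρ⁻¹:ℝ), (volume.restrict (ball (0:E) ρ)) {y : E | t ≤ ‖y‖⁻¹} :=
        lintegral_union_le _ _ _
    _ ≤ κ * ENNReal.ofReal ρ + κ * ENNReal.ofReal ρ := add_le_add h1 h2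
    _ = κ * ENNReal.ofReal (2 * ρ) := by
        rw [← mul_add, two_mul, ENNReal.ofReal_add hρ.le hρ.le]

lemma ball_bound' (x : E) {ρ : ℝ} (hρ : 0 < ρ) :
    ∫⁻ x₁ in ball x ρ, ENNReal.ofReal ‖x - x₁‖⁻¹ ≤
      volume (ball (0:E) 1) * ENNReal.ofReal (2 * ρ) := by
  have hmb : Measurable fun y : E =>
      (ball (0:E) ρ).indicator (fun y => ENNReal.ofReal ‖y‖⁻¹) y :=
    (measurable_norm.inv.ennreal_ofReal).indicator measurableSet_ball
  have key : ∫⁻ x₁ in ball x ρ, ENNReal.ofReal ‖x - x₁‖⁻¹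
      = ∫⁻ y in ball (0:E) ρ, ENNReal.ofReal ‖y‖⁻¹ := by
    rw [← lintegral_indicator measurableSet_ball, ← lintegral_indicator measurableSet_ball]
    have heq : ∀ x₁ : E, (ball x ρ).indicator (fun x₁ => ENNReal.ofReal ‖x - x₁‖⁻¹) x₁
        = ((fun y => (ball (0:E) ρ).indicator (fun y => ENNReal.ofReal ‖y‖⁻¹) y) ∘ Neg.neg)
            (x₁ - x) := by
      intro x₁
      have hmem : x₁ ∈ ball x ρ ↔ (-(x₁ - x)) ∈ ball (0:E) ρ := by
        simp [mem_ball, dist_eq_norm, neg_sub, norm_sub_rev x₁ x]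
      by_cases h : x₁ ∈ ball x ρ
      · have h' : x - x₁ ∈ ball (0:E) ρ := by
          rw [← neg_sub x₁ x]; exact hmem.1 h
        simp only [Function.comp_apply, neg_sub, indicator_of_mem h, indicator_of_mem h']
      · simp only [Function.comp_apply, indicator_of_notMem h,
          indicator_of_notMem (fun hc => h (hmem.2 hc))]
    simp_rw [heq]
    rw [lintegral_sub_right_eq_self
      ((fun y => (ball (0:E) ρ).indicator (fun y => ENNReal.ofReal ‖y‖⁻¹) y) ∘ Neg.neg) x]
    exact (Measure.measurePreserving_neg (volume : Measure E)).lintegral_comp hmb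
  rw [key]
  exact ball_bound hρ

lemma main_bound (ε : ℝ) (hε : 0 < ε) :
    ∀ x : E,
      (∫⁻ x₁ : E, ENNReal.ofReal (‖x - x₁‖⁻¹ * Real.sqrt (1 + ‖x₁‖ ^ 2) ^ (-(2 + ε))))
        ≤ ENNReal.ofReal ((Real.sqrt (1 + ‖x‖ ^ 2))⁻¹ *
            ((volume (ball (0:E) 1)).toReal * 2 ^ ((2:ℝ) + ε) +
              2 * (∫⁻ x₁ : E, ENNReal.ofReal
                (Real.sqrt (1 + ‖x₁‖ ^ 2) ^ (-(2 + ε)))).toReal)) := by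
  set κ := volume (ball (0:E) 1) with hκdef
  have hκ : κ ≠ ∞ := measure_ball_lt_top.ne
  set I := ∫⁻ x₁ : E, ENNReal.ofReal (Real.sqrt (1 + ‖x₁‖ ^ 2) ^ (-(2 + ε))) with hIdef
  intro x
  set R := Real.sqrt (1 + ‖x‖ ^ 2) with hRdef
  have hR1 : 1 ≤ R := by
    have h := Real.sqrt_le_sqrt (show (1:ℝ) ≤ 1 + ‖x‖ ^ 2 by nlinarith [sq_nonneg ‖x‖])
    rwa [Real.sqrt_one] at h
  have hR0 : (0:ℝ) < R := by linarith
  have hRB : (0:ℝ) < R / 2 := by linarith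
  -- bracket lower bound in the ball
  have hbr : ∀ x₁ : E, x₁ ∈ ball x (R/2) → R / 2 ≤ Real.sqrt (1 + ‖x₁‖ ^ 2) := by
    intro x₁ hx₁
    have h1 := bracket_triangle x x₁
    have h2 : ‖x - x₁‖ < R / 2 := by
      rw [mem_ball, dist_eq_norm, norm_sub_rev] at hx₁
      exact hx₁
    rw [← hRdef] at h1
    linarith
  have hF2 : ∀ x₁ : E, x₁ ∈ ball x (R/2) →
      Real.sqrt (1 + ‖x₁‖ ^ 2) ^ (-(2 + ε)) ≤ (R/2) ^ (-(2 + ε)) := fun x₁ hx₁ =>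
    Real.rpow_le_rpow_of_nonpos (by positivity) (hbr x₁ hx₁) (by linarith)
  have hc : (R/2) ^ (-(2 + ε)) * R ≤ 2 ^ ((2:ℝ) + ε) / R := by
    have h1 : (R/2) ^ (-(2 + ε)) = 2 ^ ((2:ℝ) + ε) / R ^ ((2:ℝ) + ε) := by
      rw [Real.rpow_neg (by positivity), Real.div_rpow hR0.le (by norm_num), inv_div]
    have h2 : R ^ ((2:ℝ)) ≤ R ^ ((2:ℝ) + ε) :=
      Real.rpow_le_rpow_of_exponent_le hR1 (by linarith)
    have hRsq : R ^ ((2:ℝ)) = R * R := by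
      rw [show ((2:ℝ)) = ((2:ℕ):ℝ) by norm_num, Real.rpow_natCast]
      ring
    have ha : (0:ℝ) < 2 ^ ((2:ℝ) + ε) := by positivity
    have hb : (0:ℝ) < R ^ ((2:ℝ) + ε) := by positivity
    rw [h1, div_mul_eq_mul_div, div_le_div_iff₀ hb hR0]
    calc 2 ^ ((2:ℝ) + ε) * R * R = 2 ^ ((2:ℝ) + ε) * (R ^ ((2:ℝ))) := by rw [hRsq]; ring
      _ ≤ 2 ^ ((2:ℝ) + ε) * R ^ ((2:ℝ) + ε) := mul_le_mul_of_nonneg_left h2 ha.le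
  set B := ball x (R/2) with hBdef
  have hin : ∫⁻ x₁ in B, ENNReal.ofReal (‖x - x₁‖⁻¹ * Real.sqrt (1 + ‖x₁‖ ^ 2) ^ (-(2 + ε)))
      ≤ ENNReal.ofReal (κ.toReal * (2 ^ ((2:ℝ) + ε) / R)) := by
    calc ∫⁻ x₁ in B, ENNReal.ofReal (‖x - x₁‖⁻¹ * Real.sqrt (1 + ‖x₁‖ ^ 2) ^ (-(2 + ε)))
        ≤ ∫⁻ x₁ in B, ENNReal.ofReal ‖x - x₁‖⁻¹ * ENNReal.ofReal ((R/2) ^ (-(2 + ε))) := by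
          refine setLIntegral_mono' measurableSet_ball fun x₁ hx₁ => ?_
          rw [← ENNReal.ofReal_mul (by positivity)]
          exact ENNReal.ofReal_le_ofReal
            (mul_le_mul_of_nonneg_left (hF2 x₁ hx₁) (by positivity))
      _ = (∫⁻ x₁ in B, ENNReal.ofReal ‖x - x₁‖⁻¹) * ENNReal.ofReal ((R/2) ^ (-(2 + ε))) :=
          lintegral_mul_const' _ _ ENNReal.ofReal_ne_top
      _ ≤ (κ * ENNReal.ofReal (2 * (R/2))) * ENNReal.ofReal ((R/2) ^ (-(2 + ε))) :=
          mul_le_mul_left (ball_bound' x hRB) _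
      _ ≤ ENNReal.ofReal (κ.toReal * (2 ^ ((2:ℝ) + ε) / R)) := by
          have hkk : κ * ENNReal.ofReal (2 * (R/2)) * ENNReal.ofReal ((R/2) ^ (-(2 + ε)))
              = ENNReal.ofReal (κ.toReal * (2 * (R/2)) * ((R/2) ^ (-(2 + ε)))) := by
            rw [ENNReal.ofReal_mul (mul_nonneg ENNReal.toReal_nonneg (by linarith)),
              ENNReal.ofReal_mul ENNReal.toReal_nonneg, ENNReal.ofReal_toReal hκ]
          rw [hkk]
          refine ENNReal.ofReal_le_ofReal ?_
          calc κ.toReal * (2 * (R/2)) * (R/2) ^ (-(2 + ε))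
              = κ.toReal * ((R/2) ^ (-(2 + ε)) * R) := by ring
            _ ≤ κ.toReal * (2 ^ ((2:ℝ) + ε) / R) :=
              mul_le_mul_of_nonneg_left hc ENNReal.toReal_nonneg
  have hout : ∫⁻ x₁ in Bᶜ, ENNReal.ofReal (‖x - x₁‖⁻¹ * Real.sqrt (1 + ‖x₁‖ ^ 2) ^ (-(2 + ε)))
      ≤ ENNReal.ofReal (2 * I.toReal / R) := by
    have hIfin : I ≠ ∞ := by
      have hint : Integrable (fun x₁ : E => ((1:ℝ) + ‖x₁‖ ^ 2) ^ (-(2 + ε) / 2)) :=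
        integrable_rpow_neg_one_add_norm_sq (by rw [finrank_E]; push_cast; linarith)
      have heq : I = ENNReal.ofReal (∫ x₁ : E, ((1:ℝ) + ‖x₁‖ ^ 2) ^ (-(2 + ε) / 2)) := by
        rw [hIdef, ofReal_integral_eq_lintegral_ofReal hint
          (Filter.Eventually.of_forall fun a => by positivity)]
        refine lintegral_congr fun x₁ => ?_
        congr 1
        rw [Real.sqrt_eq_rpow, ← Real.rpow_mul (by positivity)]
        congr 1
        ring
      rw [heq]
      exact ENNReal.ofReal_ne_top
    calc ∫⁻ x₁ in Bᶜ, ENNReal.ofReal (‖x - x₁‖⁻¹ * Real.sqrt (1 + ‖x₁‖ ^ 2) ^ (-(2 + ε)))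
        ≤ ∫⁻ x₁ in Bᶜ, ENNReal.ofReal (2/R)
            * ENNReal.ofReal (Real.sqrt (1 + ‖x₁‖ ^ 2) ^ (-(2 + ε))) := by
          refine setLIntegral_mono' measurableSet_ball.compl fun x₁ hx₁ => ?_
          rw [← ENNReal.ofReal_mul (div_nonneg (by norm_num) hR0.le)]
          refine ENNReal.ofReal_le_ofReal
            (mul_le_mul_of_nonneg_right ?_ (by positivity))
          have hd : R/2 ≤ ‖x - x₁‖ := by
            simp only [hBdef, mem_compl_iff, mem_ball, not_lt, dist_eq_norm] at hx₁
            calc R/2 ≤ ‖x₁ - x‖ := hx₁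
              _ = ‖x - x₁‖ := norm_sub_rev _ _
          calc ‖x - x₁‖⁻¹ ≤ (R/2)⁻¹ := inv_anti₀ hRB hd
            _ = 2/R := by rw [inv_div]
      _ = ENNReal.ofReal (2/R)
            * ∫⁻ x₁ in Bᶜ, ENNReal.ofReal (Real.sqrt (1 + ‖x₁‖ ^ 2) ^ (-(2 + ε))) :=
          lintegral_const_mul' _ _ ENNReal.ofReal_ne_top
      _ ≤ ENNReal.ofReal (2/R) * I := by
          refine mul_le_mul_right ?_ _
          rw [hIdef]
          exact setLIntegral_le_lintegral _ _
      _ = ENNReal.ofReal (2 * I.toReal / R) := by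
          conv_lhs => rw [← ENNReal.ofReal_toReal hIfin]
          rw [← ENNReal.ofReal_mul (div_nonneg (by norm_num) hR0.le)]
          congr 1
          ring
  calc ∫⁻ x₁ : E, ENNReal.ofReal (‖x - x₁‖⁻¹ * Real.sqrt (1 + ‖x₁‖ ^ 2) ^ (-(2 + ε)))
      = (∫⁻ x₁ in B, ENNReal.ofReal (‖x - x₁‖⁻¹ * Real.sqrt (1 + ‖x₁‖ ^ 2) ^ (-(2 + ε))))
        + ∫⁻ x₁ in Bᶜ, ENNReal.ofReal (‖x - x₁‖⁻¹ * Real.sqrt (1 + ‖x₁‖ ^ 2) ^ (-(2 + ε))) :=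
        (lintegral_add_compl _ measurableSet_ball).symm
    _ ≤ ENNReal.ofReal (κ.toReal * (2 ^ ((2:ℝ) + ε) / R)) + ENNReal.ofReal (2 * I.toReal / R) :=
        add_le_add hin hout
    _ ≤ ENNReal.ofReal (R⁻¹ * (κ.toReal * 2 ^ ((2:ℝ) + ε) + 2 * I.toReal)) := by
        rw [← ENNReal.ofReal_add (by positivity)
          (div_nonneg (by positivity) hR0.le)]
        refine ENNReal.ofReal_le_ofReal (le_of_eq ?_)
        field_simp

end

end Stmt9Aux

/-- `∫ |x - x₁|^{-1} ⟨x₁⟩^{-2-ε} dx₁ ≤ C ⟨x⟩^{-1}` on `ℝ²`; equivalently,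
the `L²(ℝ²)` norm of `x₁ ↦ ⟨x₁⟩^{-1-ε/2} |x - x₁|^{-1/2}` is at most `C' ⟨x⟩^{-1/2}`
uniformly in `x`. -/
theorem stmt_9 (ε : ℝ) (hε : 0 < ε) :
    ∃ C C' : ℝ, 0 < C ∧ 0 < C' ∧
      (∀ x : EuclideanSpace ℝ (Fin 2),
        (∫ x₁ : EuclideanSpace ℝ (Fin 2),
            ‖x - x₁‖⁻¹ * Real.sqrt (1 + ‖x₁‖ ^ 2) ^ (-(2 + ε)))
          ≤ C / Real.sqrt (1 + ‖x‖ ^ 2)) ∧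
      (∀ x : EuclideanSpace ℝ (Fin 2),
        (∫ x₁ : EuclideanSpace ℝ (Fin 2),
            (Real.sqrt (1 + ‖x₁‖ ^ 2) ^ (-(1 + ε / 2)) * ‖x - x₁‖ ^ (-(1:ℝ)/2)) ^ 2) ^ ((1:ℝ)/2)
          ≤ C' * Real.sqrt (1 + ‖x‖ ^ 2) ^ (-(1:ℝ)/2)) := by
  obtain ⟨C, hC, key⟩ : ∃ C : ℝ, 0 < C ∧ ∀ x : EuclideanSpace ℝ (Fin 2),
      (∫ x₁ : EuclideanSpace ℝ (Fin 2), ‖x - x₁‖⁻¹ * Real.sqrt (1 + ‖x₁‖ ^ 2) ^ (-(2 + ε)))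
        ≤ C / Real.sqrt (1 + ‖x‖ ^ 2) := by
    refine ⟨(volume (ball (0 : EuclideanSpace ℝ (Fin 2)) 1)).toReal * 2 ^ ((2:ℝ) + ε)
      + 2 * (∫⁻ x₁ : EuclideanSpace ℝ (Fin 2),
          ENNReal.ofReal (Real.sqrt (1 + ‖x₁‖ ^ 2) ^ (-(2 + ε)))).toReal, ?_, ?_⟩
    · have hκpos : 0 < (volume (ball (0 : EuclideanSpace ℝ (Fin 2)) 1)).toReal :=
        ENNReal.toReal_pos (measure_ball_pos _ _ one_pos).ne' measure_ball_lt_top.ne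
      have h2 : (0:ℝ) < 2 ^ ((2:ℝ) + ε) := by positivity
      have h3 : (0:ℝ) ≤ (∫⁻ x₁ : EuclideanSpace ℝ (Fin 2),
          ENNReal.ofReal (Real.sqrt (1 + ‖x₁‖ ^ 2) ^ (-(2 + ε)))).toReal :=
        ENNReal.toReal_nonneg
      nlinarith
    · intro x
      have hR0 : (0:ℝ) < Real.sqrt (1 + ‖x‖ ^ 2) := Real.sqrt_pos.2 (by positivity)
      have hmeas : AEStronglyMeasurable (fun x₁ : EuclideanSpace ℝ (Fin 2) =>
          ‖x - x₁‖⁻¹ * Real.sqrt (1 + ‖x₁‖ ^ 2) ^ (-(2 + ε))) volume := by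
        apply Measurable.aestronglyMeasurable
        fun_prop
      rw [integral_eq_lintegral_of_nonneg_ae
        (Filter.Eventually.of_forall fun x₁ => by positivity) hmeas]
      have h := Stmt9Aux.main_bound ε hε x
      have hnn : (0:ℝ) ≤ (Real.sqrt (1 + ‖x‖ ^ 2))⁻¹ *
          ((volume (ball (0 : EuclideanSpace ℝ (Fin 2)) 1)).toReal * 2 ^ ((2:ℝ) + ε)
            + 2 * (∫⁻ x₁ : EuclideanSpace ℝ (Fin 2),
              ENNReal.ofReal (Real.sqrt (1 + ‖x₁‖ ^ 2) ^ (-(2 + ε)))).toReal) := by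
        refine mul_nonneg (inv_nonneg.2 (Real.sqrt_nonneg _)) ?_
        refine add_nonneg (mul_nonneg ENNReal.toReal_nonneg (by positivity)) ?_
        exact mul_nonneg (by norm_num) ENNReal.toReal_nonneg
      have h2 := ENNReal.toReal_mono ENNReal.ofReal_ne_top h
      rw [ENNReal.toReal_ofReal hnn] at h2
      refine h2.trans (le_of_eq ?_)
      rw [div_eq_mul_inv]
      ring
  have hnn2 : ∀ x : EuclideanSpace ℝ (Fin 2),
      (0:ℝ) ≤ ∫ x₁ : EuclideanSpace ℝ (Fin 2),
        ‖x - x₁‖⁻¹ * Real.sqrt (1 + ‖x₁‖ ^ 2) ^ (-(2 + ε)) := fun x =>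
    integral_nonneg fun x₁ => by positivity
  refine ⟨C, C ^ ((1:ℝ)/2), hC, Real.rpow_pos_of_pos hC _, key, fun x => ?_⟩
  have hR0 : (0:ℝ) < Real.sqrt (1 + ‖x‖ ^ 2) := Real.sqrt_pos.2 (by positivity)
  have hsq : ∀ x₁ : EuclideanSpace ℝ (Fin 2),
      (Real.sqrt (1 + ‖x₁‖ ^ 2) ^ (-(1 + ε / 2)) * ‖x - x₁‖ ^ (-(1:ℝ)/2)) ^ 2
        = ‖x - x₁‖⁻¹ * Real.sqrt (1 + ‖x₁‖ ^ 2) ^ (-(2 + ε)) := by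
    intro x₁
    rw [mul_pow, ← Real.rpow_natCast (Real.sqrt (1 + ‖x₁‖ ^ 2) ^ (-(1 + ε / 2))) 2,
      ← Real.rpow_natCast (‖x - x₁‖ ^ (-(1:ℝ)/2)) 2,
      ← Real.rpow_mul (Real.sqrt_nonneg _), ← Real.rpow_mul (norm_nonneg _)]
    push_cast
    rw [show -(1 + ε / 2) * (2:ℝ) = -(2 + ε) by ring,
      show (-(1:ℝ)/2) * (2:ℝ) = -1 by ring, Real.rpow_neg_one]
    ring
  have heqint : (∫ x₁ : EuclideanSpace ℝ (Fin 2),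
      (Real.sqrt (1 + ‖x₁‖ ^ 2) ^ (-(1 + ε / 2)) * ‖x - x₁‖ ^ (-(1:ℝ)/2)) ^ 2)
      = ∫ x₁ : EuclideanSpace ℝ (Fin 2),
          ‖x - x₁‖⁻¹ * Real.sqrt (1 + ‖x₁‖ ^ 2) ^ (-(2 + ε)) :=
    integral_congr_ae (Filter.Eventually.of_forall hsq)
  rw [heqint]
  calc (∫ x₁ : EuclideanSpace ℝ (Fin 2),
        ‖x - x₁‖⁻¹ * Real.sqrt (1 + ‖x₁‖ ^ 2) ^ (-(2 + ε))) ^ ((1:ℝ)/2)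
      ≤ (C / Real.sqrt (1 + ‖x‖ ^ 2)) ^ ((1:ℝ)/2) :=
        Real.rpow_le_rpow (hnn2 x) (key x) (by norm_num)
    _ = C ^ ((1:ℝ)/2) * Real.sqrt (1 + ‖x‖ ^ 2) ^ (-(1:ℝ)/2) := by
        rw [Real.div_rpow hC.le (Real.sqrt_nonneg _),
          show (-(1:ℝ)/2) = -((1:ℝ)/2) by ring,
          Real.rpow_neg (Real.sqrt_nonneg _), div_eq_mul_inv]
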